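/- arXiv:2310.13658 — 3 statements merged into one kernel-verified Lean document; each statement's English description precedes it below -/
import Mathlib

section
/- For every integer n ≥ 1 and each r ∈ {1, 2}, p(n - r) = (-1)^{r-1} · ∑_{λ} ∑_{k=r}^{n} μ(k) · m_k(λ), where the outer sum is over all partitions λ of n whose parts are all at least r, and m_k(λ) denotes the multiplicity of the part k in λ (equivalently, the sum is over all solutions of r·t_r + (r+1)·t_{r+1} + ⋯ + n·t_n = n in nonnegative integers t_r, …, t_n of μ(r)t_r + μ(r+1)t_{r+1} + ⋯ + μ(n)t_n). -/
open Finset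

/-- The number of partitions of `n`. -/
def p (n : ℕ) : ℕ := Fintype.card (Nat.Partition n)

/-- The partition function extended by zero to negative integer arguments. -/
def pz (m : ℤ) : ℤ := if 0 ≤ m then (p m.toNat : ℤ) else 0

/-- `S r n k` : the total number of parts equal to `k` in all partitions of `n`
whose parts are all at least `r`. -/
def S (r n k : ℕ) : ℕ :=
  ∑ P : Nat.Partition n, if ∀ i ∈ P.parts, r ≤ i then P.parts.count k else 0

/-- number of partitions of `m` all of whose parts satisfy `q`. -/
def Nq (q : ℕ → Prop) [DecidablePred q] (m : ℕ) : ℕ :=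
  (Finset.univ.filter fun P : Nat.Partition m => ∀ i ∈ P.parts, q i).card

lemma Nq_true (m : ℕ) : Nq (fun _ => True) m = p m := by
  simp [Nq, p, Finset.filter_true_of_mem, Finset.card_univ]

lemma Nq_one (m : ℕ) : Nq (fun i => 1 ≤ i) m = p m := by
  rw [Nq, Finset.filter_true_of_mem, Finset.card_univ, p]
  intro P _ i hi
  exact P.parts_pos hi

lemma key_aux (q : ℕ → Prop) [DecidablePred q] (m j k : ℕ) (hk : 1 ≤ k) (hqk : q k) :
    (Finset.univ.filter fun P : Nat.Partition (j * k + m) =>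
        (∀ i ∈ P.parts, q i) ∧ j ≤ P.parts.count k).card = Nq q m := by
  classical
  refine Finset.card_bij'
    (fun P hP => (⟨P.parts - Multiset.replicate j k, ?_, ?_⟩ : Nat.Partition m))
    (fun Q hQ => (⟨Q.parts + Multiset.replicate j k, ?_, ?_⟩ : Nat.Partition (j * k + m)))
    ?_ ?_ ?_ ?_
  · intro i hi
    exact P.parts_pos (Multiset.mem_of_le (tsub_le_self) hi)
  · simp only [Finset.mem_filter] at hP
    have hle : Multiset.replicate j k ≤ P.parts :=
      Multiset.le_count_iff_replicate_le.mp hP.2.2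
    have h1 : P.parts - Multiset.replicate j k + Multiset.replicate j k = P.parts :=
      tsub_add_cancel_of_le hle
    have h2 := congrArg Multiset.sum h1
    rw [Multiset.sum_add, Multiset.sum_replicate, smul_eq_mul, P.parts_sum] at h2
    omega
  · intro i hi
    rcases Multiset.mem_add.mp hi with h | h
    · exact Q.parts_pos h
    · rw [Multiset.eq_of_mem_replicate h]; exact hk
  · rw [Multiset.sum_add, Multiset.sum_replicate, smul_eq_mul, Q.parts_sum]; omega
  · intro P hP
    simp only [Finset.mem_filter, Nat.Partition.mk.injEq] at hP ⊢
    exact ⟨Finset.mem_univ _, fun i hi => hP.2.1 i (Multiset.mem_of_le tsub_le_self hi)⟩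
  · intro Q hQ
    simp only [Finset.mem_filter, Finset.mem_univ, true_and]
    constructor
    · intro i hi
      rcases Multiset.mem_add.mp hi with h | h
      · simp only [Finset.mem_filter] at hQ
        exact hQ.2 i h
      · rw [Multiset.eq_of_mem_replicate h]; exact hqk
    · rw [Multiset.count_add, Multiset.count_replicate_self]; omega
  · intro P hP
    simp only [Finset.mem_filter] at hP
    have hle : Multiset.replicate j k ≤ P.parts :=
      Multiset.le_count_iff_replicate_le.mp hP.2.2
    exact Nat.Partition.ext (tsub_add_cancel_of_le hle)
  · intro Q hQ
    exact Nat.Partition.ext (by simp)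

lemma key (q : ℕ → Prop) [DecidablePred q] (n j k : ℕ) (hk : 1 ≤ k) (hqk : q k)
    (hjk : j * k ≤ n) :
    (Finset.univ.filter fun P : Nat.Partition n =>
        (∀ i ∈ P.parts, q i) ∧ j ≤ P.parts.count k).card = Nq q (n - j * k) := by
  obtain ⟨m, rfl⟩ := Nat.le.dest hjk
  rw [Nat.add_sub_cancel_left]
  exact key_aux q m j k hk hqk

lemma count_le_div (n k : ℕ) (hk : 1 ≤ k) (P : Nat.Partition n) :
    P.parts.count k ≤ n / k := by
  rw [Nat.le_div_iff_mul_le hk]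
  have hle : Multiset.replicate (P.parts.count k) k ≤ P.parts :=
    Multiset.le_count_iff_replicate_le.mp le_rfl
  have h1 : P.parts - Multiset.replicate (P.parts.count k) k
      + Multiset.replicate (P.parts.count k) k = P.parts := tsub_add_cancel_of_le hle
  have h2 := congrArg Multiset.sum h1
  rw [Multiset.sum_add, Multiset.sum_replicate, smul_eq_mul, P.parts_sum] at h2
  omega

lemma S_eq (r n k : ℕ) (hr : 1 ≤ r) (hk : r ≤ k) :
    S r n k = ∑ j ∈ Finset.Icc 1 (n / k), Nq (fun i => r ≤ i) (n - j * k) := by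
  classical
  have hk1 : 1 ≤ k := hr.trans hk
  have hcount : ∀ P : Nat.Partition n,
      P.parts.count k = ∑ j ∈ Finset.Icc 1 (n / k), if j ≤ P.parts.count k then 1 else 0 := by
    intro P
    rw [← Finset.sum_filter]
    have h : (Finset.Icc 1 (n / k)).filter (fun j => j ≤ P.parts.count k)
        = Finset.Icc 1 (P.parts.count k) := by
      ext x
      simp only [Finset.mem_filter, Finset.mem_Icc]
      have := count_le_div n k hk1 P
      omega
    simp [h]
  calc S r n k
      = ∑ P : Nat.Partition n, ∑ j ∈ Finset.Icc 1 (n / k),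
          (if (∀ i ∈ P.parts, r ≤ i) ∧ j ≤ P.parts.count k then 1 else 0) := by
        rw [S]
        refine Finset.sum_congr rfl fun P _ => ?_
        by_cases h : ∀ i ∈ P.parts, r ≤ i
        · rw [if_pos h]
          conv_lhs => rw [hcount P]
          refine Finset.sum_congr rfl fun j _ => ?_
          by_cases hj : j ≤ P.parts.count k
          · rw [if_pos hj, if_pos ⟨h, hj⟩]
          · rw [if_neg hj, if_neg (fun hc => hj hc.2)]
        · rw [if_neg h]
          simp only [if_neg (fun hc : (∀ i ∈ P.parts, r ≤ i) ∧ _ => h hc.1),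
            Finset.sum_const_zero]
    _ = ∑ j ∈ Finset.Icc 1 (n / k), ∑ P : Nat.Partition n,
          (if (∀ i ∈ P.parts, r ≤ i) ∧ j ≤ P.parts.count k then 1 else 0) :=
        Finset.sum_comm
    _ = ∑ j ∈ Finset.Icc 1 (n / k), Nq (fun i => r ≤ i) (n - j * k) := by
        refine Finset.sum_congr rfl fun j hj => ?_
        rw [← Finset.sum_filter, Finset.sum_const, smul_eq_mul, mul_one]
        rw [Finset.mem_Icc, Nat.le_div_iff_mul_le hk1] at hj
        exact key (fun i => r ≤ i) n j k hk1 hk hj.2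

lemma musum (d : ℕ) (hd : d ≠ 0) :
    ∑ k ∈ d.divisors, (ArithmeticFunction.moebius k : ℤ) = if d = 1 then 1 else 0 := by
  rw [← ArithmeticFunction.coe_mul_zeta_apply, ArithmeticFunction.moebius_mul_coe_zeta,
    ArithmeticFunction.one_apply]

/-- regrouping over divisors -/
lemma regroup (n r : ℕ) (hr : 1 ≤ r) (f : ℕ → ℤ) :
    ∑ k ∈ Finset.Icc r n, (ArithmeticFunction.moebius k : ℤ) *
        ∑ j ∈ Finset.Icc 1 (n / k), f (n - j * k)
    = ∑ d ∈ Finset.Icc 1 n,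
        (∑ k ∈ d.divisors.filter (fun k => r ≤ k), (ArithmeticFunction.moebius k : ℤ))
          * f (n - d) := by
  classical
  simp_rw [Finset.mul_sum, Finset.sum_mul]
  rw [Finset.sum_sigma' (Finset.Icc r n) (fun k => Finset.Icc 1 (n / k))
        (fun k j => (ArithmeticFunction.moebius k : ℤ) * f (n - j * k)),
      Finset.sum_sigma' (Finset.Icc 1 n) (fun d => d.divisors.filter (fun k => r ≤ k))
        (fun d k => (ArithmeticFunction.moebius k : ℤ) * f (n - d))]
  refine Finset.sum_nbij' (fun x => ⟨x.1 * x.2, x.1⟩) (fun y => ⟨y.2, y.1 / y.2⟩)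
    ?_ ?_ ?_ ?_ ?_
  · rintro ⟨k, j⟩ hx
    simp only [Finset.mem_sigma, Finset.mem_Icc] at hx
    have hk1 : 1 ≤ k := hr.trans hx.1.1
    have hj1 : 1 ≤ j := hx.2.1
    have hjn : j * k ≤ n := (Nat.le_div_iff_mul_le hk1).mp hx.2.2
    simp only [Finset.mem_sigma, Finset.mem_Icc, Finset.mem_filter, Nat.mem_divisors]
    refine ⟨⟨Nat.one_le_iff_ne_zero.mpr (by positivity), by nlinarith⟩,
      ⟨⟨Dvd.intro j rfl, by positivity⟩, hx.1.1⟩⟩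
  · rintro ⟨d, k⟩ hy
    simp only [Finset.mem_sigma, Finset.mem_Icc, Finset.mem_filter, Nat.mem_divisors] at hy
    obtain ⟨⟨hd1, hdn⟩, ⟨hkd, hd0⟩, hrk⟩ := hy
    have hk1 : 1 ≤ k := hr.trans hrk
    have hkd' : k ≤ d := Nat.le_of_dvd (by omega) hkd
    simp only [Finset.mem_sigma, Finset.mem_Icc]
    refine ⟨⟨hrk, hkd'.trans hdn⟩, ?_, ?_⟩
    · exact Nat.one_le_div_iff hk1 |>.mpr hkd'
    · exact Nat.div_le_div_right hdn
  · rintro ⟨k, j⟩ hx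
    simp only [Finset.mem_sigma, Finset.mem_Icc] at hx
    have hk1 : 1 ≤ k := hr.trans hx.1.1
    have : k * j / k = j := Nat.mul_div_cancel_left j (by omega)
    simp [this]
  · rintro ⟨d, k⟩ hy
    simp only [Finset.mem_sigma, Finset.mem_Icc, Finset.mem_filter, Nat.mem_divisors] at hy
    have : k * (d / k) = d := Nat.mul_div_cancel' hy.2.1.1
    simp [this]
  · rintro ⟨k, j⟩ hx
    simp [mul_comm j k]

lemma Nq_two (m : ℕ) (hm : 1 ≤ m) :
    (Nq (fun i => 2 ≤ i) m : ℤ) = (p m : ℤ) - (p (m - 1) : ℤ) := by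
  classical
  have h1 : (Finset.univ.filter fun P : Nat.Partition m =>
      (∀ i ∈ P.parts, True) ∧ 1 ≤ P.parts.count 1).card = Nq (fun _ => True) (m - 1) := by
    exact key (fun _ => True) m 1 1 le_rfl trivial (by omega)
  rw [Nq_true] at h1
  have h2 : Nq (fun i => 2 ≤ i) m
      = (Finset.univ.filter fun P : Nat.Partition m => ¬ ((∀ i ∈ P.parts, True) ∧
          1 ≤ P.parts.count 1)).card := by
    rw [Nq]
    congr 1
    refine Finset.filter_congr fun P _ => ?_
    constructor
    · intro h hc
      have h1mem : (1 : ℕ) ∈ P.parts := Multiset.count_pos.mp (by omega)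
      exact absurd (h 1 h1mem) (by omega)
    · intro h i hi
      have hne : i ≠ 1 := by
        intro hi1
        subst hi1
        exact h ⟨fun _ _ => trivial, Multiset.one_le_count_iff_mem.mpr hi⟩
      have := P.parts_pos hi
      omega
  have h3 := Finset.card_filter_add_card_filter_not
    (s := (Finset.univ : Finset (Nat.Partition m)))
    (p := fun P : Nat.Partition m => (∀ i ∈ P.parts, True) ∧ 1 ≤ P.parts.count 1)
  have hpm : p m = Fintype.card (Nat.Partition m) := rfl
  rw [Finset.card_univ] at h3
  have hfinal : Nq (fun i => 2 ≤ i) m + p (m - 1) = p m := by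
    rw [h2, ← h1]
    omega
  omega

lemma sum_Nq_two (M : ℕ) :
    ∑ m ∈ Finset.range (M + 1), (Nq (fun i => 2 ≤ i) m : ℤ) = (p M : ℤ) := by
  induction M with
  | zero =>
    simp only [zero_add, Finset.range_one, Finset.sum_singleton]
    have h0 : Nq (fun i => 2 ≤ i) 0 = p 0 := by
      rw [Nq, Finset.filter_true_of_mem, Finset.card_univ]
      · rfl
      · intro P _ i hi
        simp at hi
    exact_mod_cast h0
  | succ M ih =>
    rw [Finset.sum_range_succ, ih, Nq_two (M + 1) (by omega)]
    simp

theorem partition_shift_eq_sum_over_partitions_moebius_mult (n : ℕ) (hn : 1 ≤ n)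
    (r : ℕ) (hr : r = 1 ∨ r = 2) :
    pz ((n : ℤ) - (r : ℤ)) =
      (-1) ^ (r - 1) *
        ∑ P : Nat.Partition n,
          (if ∀ i ∈ P.parts, r ≤ i then
            ∑ k ∈ Finset.Icc r n,
              ArithmeticFunction.moebius k * (P.parts.count k : ℤ)
          else 0) := by
  classical
  have hr1 : 1 ≤ r := by omega
  -- Step 1 : rewrite the big sum as ∑_k μ k * S r n k
  have step1 : ∑ P : Nat.Partition n,
        (if ∀ i ∈ P.parts, r ≤ i then
          ∑ k ∈ Finset.Icc r n,
            (ArithmeticFunction.moebius k : ℤ) * (P.parts.count k : ℤ)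
        else 0)
      = ∑ k ∈ Finset.Icc r n, (ArithmeticFunction.moebius k : ℤ) * (S r n k : ℤ) := by
    have : ∀ P : Nat.Partition n,
        (if ∀ i ∈ P.parts, r ≤ i then
          ∑ k ∈ Finset.Icc r n,
            (ArithmeticFunction.moebius k : ℤ) * (P.parts.count k : ℤ)
        else 0)
        = ∑ k ∈ Finset.Icc r n, (ArithmeticFunction.moebius k : ℤ) *
            (if ∀ i ∈ P.parts, r ≤ i then (P.parts.count k : ℤ) else 0) := by
      intro P
      split <;> simp
    simp_rw [this]
    rw [Finset.sum_comm]
    refine Finset.sum_congr rfl fun k _ => ?_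
    rw [← Finset.mul_sum]
    congr 1
    rw [S]
    push_cast
    refine Finset.sum_congr rfl fun P _ => ?_
    split <;> simp
  rw [step1]
  -- Step 2 : S as a sum over multiples, then regroup over divisors
  have step2 : ∑ k ∈ Finset.Icc r n, (ArithmeticFunction.moebius k : ℤ) * (S r n k : ℤ)
      = ∑ d ∈ Finset.Icc 1 n,
          (∑ k ∈ d.divisors.filter (fun k => r ≤ k), (ArithmeticFunction.moebius k : ℤ))
            * (Nq (fun i => r ≤ i) (n - d) : ℤ) := by
    rw [← regroup n r hr1 (fun m => (Nq (fun i => r ≤ i) m : ℤ))]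
    refine Finset.sum_congr rfl fun k hk => ?_
    rw [Finset.mem_Icc] at hk
    congr 1
    rw [S_eq r n k hr1 hk.1]
    push_cast
    rfl
  rw [step2]
  rcases hr with rfl | rfl
  · -- r = 1
    have hdiv : ∀ d ∈ Finset.Icc 1 n,
        (∑ k ∈ d.divisors.filter (fun k => 1 ≤ k), (ArithmeticFunction.moebius k : ℤ))
          * (Nq (fun i => 1 ≤ i) (n - d) : ℤ)
        = if d = 1 then (Nq (fun i => 1 ≤ i) (n - d) : ℤ) else 0 := by
      intro d hd
      rw [Finset.mem_Icc] at hd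
      have : d.divisors.filter (fun k => 1 ≤ k) = d.divisors := by
        refine Finset.filter_true_of_mem fun k hk => ?_
        rw [Nat.mem_divisors] at hk
        have := Nat.pos_of_dvd_of_pos hk.1 (by omega)
        omega
      rw [this, musum d (by omega)]
      split <;> simp
    rw [Finset.sum_congr rfl hdiv, Finset.sum_ite_eq' (Finset.Icc 1 n) 1
      (fun d => (Nq (fun i => 1 ≤ i) (n - d) : ℤ)), if_pos (by simp [Finset.mem_Icc]; omega)]
    rw [Nq_one]
    rw [pz, if_pos (by push_cast; omega)]
    have h1 : ((n : ℤ) - ((1:ℕ) : ℤ)).toNat = n - 1 := by push_cast; omega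
    rw [h1]
    norm_num
  · -- r = 2
    have hdiv : ∀ d ∈ Finset.Icc 1 n,
        (∑ k ∈ d.divisors.filter (fun k => 2 ≤ k), (ArithmeticFunction.moebius k : ℤ))
          * (Nq (fun i => 2 ≤ i) (n - d) : ℤ)
        = if d = 1 then 0 else -(Nq (fun i => 2 ≤ i) (n - d) : ℤ) := by
      intro d hd
      rw [Finset.mem_Icc] at hd
      have hfe : d.divisors.filter (fun k => 2 ≤ k) = d.divisors.erase 1 := by
        ext k
        simp only [Finset.mem_filter, Finset.mem_erase, Nat.mem_divisors]
        constructor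
        · rintro ⟨hk, h2⟩; exact ⟨by omega, hk⟩
        · rintro ⟨h1, hk⟩
          have := Nat.pos_of_dvd_of_pos hk.1 (by omega)
          exact ⟨hk, by omega⟩
      have h1mem : (1 : ℕ) ∈ d.divisors := Nat.one_mem_divisors.mpr (by omega)
      have := Finset.sum_erase_add d.divisors
        (fun k => (ArithmeticFunction.moebius k : ℤ)) h1mem
      rw [hfe]
      have hsum : ∑ k ∈ d.divisors.erase 1, (ArithmeticFunction.moebius k : ℤ)
          = (if d = 1 then 1 else 0) - 1 := by
        rw [← musum d (by omega), ← this]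
        simp [ArithmeticFunction.moebius_apply_one]
      rw [hsum]
      split <;> ring
    rw [Finset.sum_congr rfl hdiv]
    have hins : Finset.Icc 1 n = insert 1 (Finset.Icc 2 n) := by
      ext x; simp [Finset.mem_Icc, Finset.mem_insert]; omega
    rw [hins, Finset.sum_insert (by simp)]
    rw [if_pos rfl, zero_add]
    have hrest : ∀ d ∈ Finset.Icc 2 n,
        (if d = 1 then (0:ℤ) else -(Nq (fun i => 2 ≤ i) (n - d) : ℤ))
        = -(Nq (fun i => 2 ≤ i) (n - d) : ℤ) := by
      intro d hd
      rw [Finset.mem_Icc] at hd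
      rw [if_neg (by omega)]
    rw [Finset.sum_congr rfl hrest]
    rcases Nat.lt_or_ge n 2 with h2 | h2
    · -- n = 1
      interval_cases n
      simp [pz]
    · -- n ≥ 2
      have hre : ∑ d ∈ Finset.Icc 2 n, -(Nq (fun i => 2 ≤ i) (n - d) : ℤ)
          = -∑ m ∈ Finset.range (n - 2 + 1), (Nq (fun i => 2 ≤ i) m : ℤ) := by
        rw [← Finset.sum_neg_distrib]
        refine Finset.sum_nbij' (fun d => n - d) (fun m => n - m) ?_ ?_ ?_ ?_ ?_
        · intro d hd; rw [Finset.mem_Icc] at hd; simp only [Finset.mem_range]; omega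
        · intro m hm; rw [Finset.mem_range] at hm; simp only [Finset.mem_Icc]; omega
        · intro d hd; rw [Finset.mem_Icc] at hd; show n - (n - d) = d; omega
        · intro m hm; rw [Finset.mem_range] at hm; show n - (n - m) = m; omega
        · intro d _; simp
      rw [hre, sum_Nq_two (n - 2)]
      rw [pz, if_pos (by push_cast; omega)]
      have h1 : ((n : ℤ) - ((2:ℕ) : ℤ)).toNat = n - 2 := by push_cast; omega
      rw [h1]
      norm_num
end

section
/- Define integer sequences a_{r,j} and b_{r,j} (r ≥ 1, j ≥ 0) by the initial conditions a_{1,0} = b_{1,0} = 1 and a_{1,j} = b_{1,j} = 0 for j > 0, together with the recurrences b_{r+1,j} = b_{r,j} - [j ≥ r]·b_{r,j-r} and a_{r+1,j} = a_{r,j+1} - μ(r)·b_{r,j+1} - [j+1 ≥ r]·a_{r,j+1-r}, where [P] is 1 if P holds and 0 otherwise. Then for all integers n ≥ 0 and r ≥ 1, ∑_{k=r}^{n+r} S^{(r)}_{n+r,k} · μ(k) = ∑_{j ≥ 0} a_{r,j} · p(n-j), where p(m) = 0 for m < 0. -/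
open Finset

/-- number of partitions of `n` with all parts at least `r`. -/
def T (r n : ℕ) : ℕ :=
  ∑ P : Nat.Partition n, if ∀ i ∈ P.parts, r ≤ i then 1 else 0

lemma pz_natCast (x : ℕ) : pz x = p x := by simp [pz]

lemma pz_neg {m : ℤ} (h : m < 0) : pz m = 0 := by simp [pz]; omega

lemma part_le {n : ℕ} (P : Nat.Partition n) {i : ℕ} (hi : i ∈ P.parts) : i ≤ n := by
  rw [← P.parts_sum]
  exact Multiset.single_le_sum (fun x _ => Nat.zero_le x) i hi

lemma S_eq_zero_of_lt {r n k : ℕ} (h : n < k) : S r n k = 0 := by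
  apply Finset.sum_eq_zero
  intro P _
  have : k ∉ P.parts := fun hk => absurd (part_le P hk) (by omega)
  simp [Multiset.count_eq_zero_of_notMem this]

/-- the cons/erase equivalence -/
def consEquiv (n k : ℕ) (hk : 0 < k) (hkn : k ≤ n) :
    {P : Nat.Partition n // k ∈ P.parts} ≃ Nat.Partition (n - k) where
  toFun P := ⟨P.1.parts.erase k,
    fun hi => P.1.parts_pos (Multiset.mem_of_mem_erase hi),
    by
      have h1 : k + (P.1.parts.erase k).sum = P.1.parts.sum := by
        rw [← Multiset.sum_cons, Multiset.cons_erase P.2]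
      have h2 := P.1.parts_sum
      omega⟩
  invFun Q := ⟨⟨k ::ₘ Q.parts,
    fun hi => by
      rcases Multiset.mem_cons.1 hi with h | h
      · omega
      · exact Q.parts_pos h,
    by rw [Multiset.sum_cons, Q.parts_sum]; omega⟩, Multiset.mem_cons_self _ _⟩
  left_inv P := Subtype.ext (Nat.Partition.ext (Multiset.cons_erase P.2))
  right_inv Q := Nat.Partition.ext (Multiset.erase_cons_head _ _)

/-- transfer lemma -/
lemma sum_partition_cons {M : Type*} [AddCommMonoid M] (n k : ℕ) (hk : 0 < k) (hkn : k ≤ n)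
    (f : Multiset ℕ → M) :
    (∑ P : Nat.Partition n, if k ∈ P.parts then f P.parts else 0)
      = ∑ Q : Nat.Partition (n - k), f (k ::ₘ Q.parts) := by
  classical
  rw [← Finset.sum_filter]
  rw [Finset.sum_subtype (s := Finset.univ.filter fun P : Nat.Partition n => k ∈ P.parts)
    (p := fun P : Nat.Partition n => k ∈ P.parts) (by simp) (fun P => f P.parts)]
  rw [← Equiv.sum_comp (consEquiv n k hk hkn) (fun Q => f (k ::ₘ Q.parts))]
  refine Finset.sum_congr rfl fun P _ => ?_
  simp only [consEquiv, Equiv.coe_fn_mk]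
  rw [Multiset.cons_erase P.2]
lemma p_eq_sum_one (n : ℕ) : p n = ∑ _P : Nat.Partition n, 1 := by
  simp [p]

lemma T_one (n : ℕ) : T 1 n = p n := by
  rw [p_eq_sum_one]
  refine Finset.sum_congr rfl fun P _ => ?_
  rw [if_pos (show ∀ i ∈ P.parts, 1 ≤ i from fun i hi => P.parts_pos hi)]

lemma T_zero (r : ℕ) : T r 0 = 1 := by
  rw [T]
  rw [Finset.sum_eq_single_of_mem (default : Nat.Partition 0) (Finset.mem_univ _)]
  · simp
  · intro P _ hP
    exact absurd (Subsingleton.elim P default) hP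

lemma T_of_lt {r n : ℕ} (h0 : 0 < n) (h : n < r) : T r n = 0 := by
  apply Finset.sum_eq_zero
  intro P _
  rw [if_neg]
  intro hall
  have hne : P.parts ≠ 0 := by
    intro h0'
    have := P.parts_sum
    rw [h0'] at this
    simp at this
    omega
  obtain ⟨i, hi⟩ := Multiset.exists_mem_of_ne_zero hne
  have := part_le P hi
  have := hall i hi
  omega

lemma S_one (n k : ℕ) : S 1 n k = ∑ P : Nat.Partition n, P.parts.count k := by
  refine Finset.sum_congr rfl fun P _ => ?_
  rw [if_pos (show ∀ i ∈ P.parts, 1 ≤ i from fun i hi => P.parts_pos hi)]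

/-- master removal lemma: removing one part `r`. -/
lemma L1 (r n j : ℕ) (hr : 1 ≤ r) (hn : r ≤ n) :
    S r n j = S (r + 1) n j + (S r (n - r) j + if j = r then T r (n - r) else 0) := by
  classical
  have key := sum_partition_cons n r hr hn
    (fun M => if ∀ i ∈ M, r ≤ i then M.count j else 0)
  -- split S r n j according to whether r ∈ parts
  have split : S r n j =
      (∑ P : Nat.Partition n, if r ∈ P.parts then
          (if ∀ i ∈ P.parts, r ≤ i then P.parts.count j else 0) else 0)
        + S (r + 1) n j := by
    rw [S, S, ← Finset.sum_add_distrib]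
    refine Finset.sum_congr rfl fun P _ => ?_
    by_cases hm : r ∈ P.parts
    · rw [if_pos hm]
      have : ¬ (∀ i ∈ P.parts, r + 1 ≤ i) := fun h => by have := h r hm; omega
      rw [if_neg this, add_zero]
    · rw [if_neg hm, zero_add]
      congr 1
      apply propext
      constructor
      · intro h i hi
        have h1 := h i hi
        have h2 : i ≠ r := fun he => hm (he ▸ hi)
        omega
      · intro h i hi
        have := h i hi; omega
  rw [split, key]
  have : (∑ Q : Nat.Partition (n - r),
      (fun M => if ∀ i ∈ M, r ≤ i then M.count j else 0) (r ::ₘ Q.parts))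
      = S r (n - r) j + if j = r then T r (n - r) else 0 := by
    rw [S, T]
    by_cases hj : j = r
    · rw [if_pos hj, ← Finset.sum_add_distrib]
      refine Finset.sum_congr rfl fun Q _ => ?_
      simp only
      by_cases hc : ∀ i ∈ Q.parts, r ≤ i
      · rw [if_pos, if_pos hc, if_pos hc, Multiset.count_cons, if_pos hj]
        intro i hi
        rcases Multiset.mem_cons.1 hi with h | h
        · omega
        · exact hc i h
      · rw [if_neg, if_neg hc, if_neg hc]
        intro hall
        exact hc fun i hi => hall i (Multiset.mem_cons_of_mem hi)
    · rw [if_neg hj, add_zero]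
      refine Finset.sum_congr rfl fun Q _ => ?_
      simp only
      by_cases hc : ∀ i ∈ Q.parts, r ≤ i
      · rw [if_pos, if_pos hc, Multiset.count_cons, if_neg hj, add_zero]
        intro i hi
        rcases Multiset.mem_cons.1 hi with h | h
        · omega
        · exact hc i h
      · rw [if_neg, if_neg hc]
        intro hall
        exact hc fun i hi => hall i (Multiset.mem_cons_of_mem hi)
  rw [this, add_comm]
lemma S_succ_self_eq_zero (r n : ℕ) : S (r + 1) n r = 0 := by
  apply Finset.sum_eq_zero
  intro P _
  by_cases hc : ∀ i ∈ P.parts, r + 1 ≤ i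
  · rw [if_pos hc]
    by_contra h
    have hm : r ∈ P.parts := by
      rw [← Multiset.count_pos]; omega
    have := hc r hm
    omega
  · rw [if_neg hc]

/-- L3 -/
lemma S_self_step (r n : ℕ) (hr : 1 ≤ r) (hn : r ≤ n) :
    S r n r = S r (n - r) r + T r (n - r) := by
  have := L1 r n r hr hn
  rw [S_succ_self_eq_zero, if_pos rfl] at this
  omega

/-- L4 : T recurrence -/
lemma T_step (r n : ℕ) (hr : 1 ≤ r) (hn : r ≤ n) :
    T r n = T (r + 1) n + T r (n - r) := by
  classical
  have key := sum_partition_cons n r hr hn (fun M => if ∀ i ∈ M, r ≤ i then 1 else 0)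
  have split : T r n =
      (∑ P : Nat.Partition n, if r ∈ P.parts then
          (if ∀ i ∈ P.parts, r ≤ i then 1 else 0) else 0)
        + T (r + 1) n := by
    rw [T, T, ← Finset.sum_add_distrib]
    refine Finset.sum_congr rfl fun P _ => ?_
    by_cases hm : r ∈ P.parts
    · rw [if_pos hm]
      have : ¬ (∀ i ∈ P.parts, r + 1 ≤ i) := fun h => by have := h r hm; omega
      rw [if_neg this, add_zero]
    · rw [if_neg hm, zero_add]
      congr 1
      apply propext
      constructor
      · intro h i hi
        have h1 := h i hi
        have h2 : i ≠ r := fun he => hm (he ▸ hi)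
        omega
      · intro h i hi; have := h i hi; omega
  rw [split, key]
  have : (∑ Q : Nat.Partition (n - r),
      (fun M => if ∀ i ∈ M, r ≤ i then (1:ℕ) else 0) (r ::ₘ Q.parts)) = T r (n - r) := by
    rw [T]
    refine Finset.sum_congr rfl fun Q _ => ?_
    simp only
    congr 1
    apply propext
    constructor
    · intro h i hi
      exact h i (Multiset.mem_cons_of_mem hi)
    · intro h i hi
      rcases Multiset.mem_cons.1 hi with h' | h'
      · omega
      · exact h i h'
  rw [this, add_comm]

/-- L2 : one-step recursion for S 1 in k -/
lemma S_one_step (n k : ℕ) (hk : 1 ≤ k) (hn : k ≤ n) :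
    S 1 n k = S 1 (n - k) k + p (n - k) := by
  classical
  have key := sum_partition_cons n k hk hn (fun M => M.count k)
  have split : (∑ P : Nat.Partition n, if k ∈ P.parts then P.parts.count k else 0)
      = S 1 n k := by
    rw [S_one]
    refine Finset.sum_congr rfl fun P _ => ?_
    by_cases hm : k ∈ P.parts
    · rw [if_pos hm]
    · rw [if_neg hm, Multiset.count_eq_zero_of_notMem hm]
  rw [split] at key
  rw [key, S_one, p_eq_sum_one, ← Finset.sum_add_distrib]
  refine Finset.sum_congr rfl fun Q _ => ?_
  rw [Multiset.count_cons, if_pos rfl]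
/-- The coefficients `b r j`. -/
def b : ℕ → ℕ → ℤ
  | 0, _ => 0
  | 1, j => if j = 0 then 1 else 0
  | r + 1, j => b r j - (if r ≤ j then b r (j - r) else 0)

/-- The coefficients `a r j`. -/
def a : ℕ → ℕ → ℤ
  | 0, _ => 0
  | 1, j => if j = 0 then 1 else 0
  | r + 1, j =>
      a r (j + 1) - ArithmeticFunction.moebius r * b r (j + 1) -
        (if r ≤ j + 1 then a r (j + 1 - r) else 0)

lemma b_succ (r j : ℕ) (hr : 1 ≤ r) :
    b (r + 1) j = b r j - (if r ≤ j then b r (j - r) else 0) := by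
  match r, hr with
  | 1, _ => rfl
  | (r + 2), _ => rfl

lemma a_succ (r j : ℕ) (hr : 1 ≤ r) :
    a (r + 1) j = a r (j + 1) - ArithmeticFunction.moebius r * b r (j + 1) -
      (if r ≤ j + 1 then a r (j + 1 - r) else 0) := by
  match r, hr with
  | 1, _ => rfl
  | (r + 2), _ => rfl

lemma b_zero (r : ℕ) (hr : 1 ≤ r) : b r 0 = 1 := by
  induction r with
  | zero => omega
  | succ r ih =>
    rcases Nat.eq_or_lt_of_le hr with h | h
    · simp [← h, b]
    · have hr' : 1 ≤ r := by omega
      rw [b_succ r 0 hr', if_neg (by omega), ih hr', sub_zero]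

lemma sum_shift (M r : ℕ) (hr : 1 ≤ r) (h : r ≤ M) (F G : ℕ → ℤ)
    (hFG : ∀ j, r ≤ j → j ≤ M → F j = G (j - r)) :
    ∑ j ∈ Finset.range (M + 1), (if r ≤ j then F j else 0)
      = ∑ j ∈ Finset.range (M - r + 1), G j := by
  rw [← Finset.sum_filter]
  apply Finset.sum_nbij' (i := fun j => j - r) (j := fun j => j + r)
  · intro x hx
    simp only [Finset.mem_filter, Finset.mem_range] at hx
    simp only [Finset.mem_range]
    omega
  · intro x hx
    simp only [Finset.mem_range] at hx
    simp only [Finset.mem_filter, Finset.mem_range]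
    omega
  · intro x hx
    simp only [Finset.mem_filter, Finset.mem_range] at hx
    omega
  · intro x hx
    simp only [Finset.mem_range] at hx
    omega
  · intro x hx
    simp only [Finset.mem_filter, Finset.mem_range] at hx
    exact hFG x hx.2 (by omega)

/-- Q formula -/
lemma T_eq_sum_b : ∀ (r : ℕ), 1 ≤ r → ∀ (m : ℕ),
    (T r m : ℤ) = ∑ j ∈ Finset.range (m + 1), b r j * pz ((m : ℤ) - (j : ℤ)) := by
  intro r
  induction r with
  | zero => omega
  | succ r ih =>
    intro hr m
    rcases Nat.eq_or_lt_of_le hr with h | h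
    · -- r + 1 = 1
      have hr0 : r = 0 := by omega
      subst hr0
      rw [T_one]
      rw [Finset.sum_eq_single_of_mem 0 (by simp)]
      · simp [b, pz_natCast]
      · intro j _ hj
        simp [b, hj]
    · have hr' : 1 ≤ r := by omega
      have hsplit : ∑ j ∈ Finset.range (m + 1), b (r+1) j * pz ((m : ℤ) - (j : ℤ))
          = (∑ j ∈ Finset.range (m + 1), b r j * pz ((m : ℤ) - (j : ℤ)))
            - ∑ j ∈ Finset.range (m + 1),
                (if r ≤ j then b r (j - r) * pz ((m : ℤ) - (j : ℤ)) else 0) := by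
        rw [← Finset.sum_sub_distrib]
        refine Finset.sum_congr rfl fun j _ => ?_
        rw [b_succ r j hr', sub_mul, ite_mul, zero_mul]
      rw [hsplit, ← ih hr' m]
      by_cases hm : r ≤ m
      · -- second sum = T r (m - r)
        rw [sum_shift m r hr' hm _ (fun j => b r j * pz (((m - r : ℕ) : ℤ) - (j : ℤ)))
          (fun j hj1 hj2 => by
            congr 1
            push_cast [Nat.cast_sub hm, Nat.cast_sub hj1]
            ring_nf)]
        rw [← ih hr' (m - r)]
        have hTm := T_step r m hr' hm
        push_cast
        omega
      · -- m < r : second sum is 0, T (r+1) m = T r m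
        have h2 : ∑ j ∈ Finset.range (m + 1),
            (if r ≤ j then b r (j - r) * pz ((m : ℤ) - (j : ℤ)) else 0) = 0 := by
          apply Finset.sum_eq_zero
          intro j hj
          rw [Finset.mem_range] at hj
          rw [if_neg (by omega)]
        rw [h2, sub_zero]
        have : T (r + 1) m = T r m := by
          rcases Nat.eq_zero_or_pos m with h0 | h0
          · subst h0; rw [T_zero, T_zero]
          · rw [T_of_lt h0 (by omega), T_of_lt h0 (by omega)]
        rw [this]

/-- S r r r = 1 -/
lemma S_self (r : ℕ) (hr : 1 ≤ r) : S r r r = 1 := by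
  classical
  have hkey : ∀ P : Nat.Partition r, r ∈ P.parts → P = Nat.Partition.indiscrete r := by
    intro P hm
    apply Nat.Partition.ext
    have h1 : r ::ₘ P.parts.erase r = P.parts := Multiset.cons_erase hm
    have h2 : r + (P.parts.erase r).sum = r := by
      rw [← Multiset.sum_cons, h1, P.parts_sum]
    have h3 : (P.parts.erase r).sum = 0 := by omega
    have h4 : P.parts.erase r = 0 := by
      by_contra h
      obtain ⟨i, hi⟩ := Multiset.exists_mem_of_ne_zero h
      have hpos := P.parts_pos (Multiset.mem_of_mem_erase hi)
      have : i ≤ (P.parts.erase r).sum :=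
        Multiset.single_le_sum (fun x _ => Nat.zero_le x) i hi
      omega
    rw [← h1, h4, Nat.Partition.indiscrete_parts (by omega)]
    rfl
  rw [S, Finset.sum_eq_single_of_mem (Nat.Partition.indiscrete r) (Finset.mem_univ _)]
  · rw [Nat.Partition.indiscrete_parts (by omega), if_pos (by simp)]
    simp
  · intro P _ hP
    have hm : r ∉ P.parts := fun hm => hP (hkey P hm)
    rw [Multiset.count_eq_zero_of_notMem hm]
    simp
lemma S_one_formula (k : ℕ) (hk : 1 ≤ k) : ∀ m : ℕ,
    (S 1 m k : ℤ) = ∑ t ∈ Finset.Icc 1 m, pz ((m : ℤ) - (t : ℤ) * (k : ℤ)) := by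
  intro m
  induction m using Nat.strong_induction_on with
  | _ m ih =>
    by_cases hkm : k ≤ m
    · have hm1 : 1 ≤ m := le_trans hk hkm
      have hstep := S_one_step m k hk hkm
      have hIH := ih (m - k) (by omega)
      have hsplit : Finset.Icc 1 m = insert 1 (Finset.Icc 2 m) := by
        ext x
        simp only [Finset.mem_Icc, Finset.mem_insert]
        omega
      rw [hsplit, Finset.sum_insert (by simp)]
      have e1 : ∑ t ∈ Finset.Icc 2 m, pz ((m : ℤ) - (t : ℤ) * (k : ℤ))
          = ∑ t ∈ Finset.Icc 1 (m - 1), pz (((m - k : ℕ) : ℤ) - (t : ℤ) * (k : ℤ)) := by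
        apply Finset.sum_nbij' (i := fun t => t - 1) (j := fun t => t + 1)
        · intro x hx; simp only [Finset.mem_Icc] at *; omega
        · intro x hx; simp only [Finset.mem_Icc] at *; omega
        · intro x hx; simp only [Finset.mem_Icc] at hx; omega
        · intro x hx; simp only [Finset.mem_Icc] at hx; omega
        · intro x hx
          simp only [Finset.mem_Icc] at hx
          congr 1
          have h1 : ((x - 1 : ℕ) : ℤ) = (x : ℤ) - 1 := by
            push_cast [Nat.cast_sub (by omega : 1 ≤ x)]; ring
          have h2 : ((m - k : ℕ) : ℤ) = (m : ℤ) - (k : ℤ) := by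
            push_cast [Nat.cast_sub hkm]; ring
          rw [h1, h2]; ring
      have e2 : ∑ t ∈ Finset.Icc 1 (m - 1), pz (((m - k : ℕ) : ℤ) - (t : ℤ) * (k : ℤ))
          = ∑ t ∈ Finset.Icc 1 (m - k), pz (((m - k : ℕ) : ℤ) - (t : ℤ) * (k : ℤ)) := by
        symm
        apply Finset.sum_subset
        · intro x hx; simp only [Finset.mem_Icc] at *; omega
        · intro x hx hx'
          simp only [Finset.mem_Icc] at hx hx'
          apply pz_neg
          have h2 : ((m - k : ℕ) : ℤ) = (m : ℤ) - (k : ℤ) := by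
            push_cast [Nat.cast_sub hkm]; ring
          rw [h2]
          have h3 : m - k + 1 ≤ x := by omega
          have : ((m - k + 1 : ℕ) : ℤ) ≤ (x : ℤ) := by exact_mod_cast h3
          have h4 : ((m - k : ℕ) : ℤ) + 1 ≤ (x : ℤ) := by push_cast at this ⊢; omega
          have hk1 : (1:ℤ) ≤ (k:ℤ) := by exact_mod_cast hk
          have hx1 : (1:ℤ) ≤ (x:ℤ) := by exact_mod_cast hx.1
          rw [h2] at h4
          nlinarith
      rw [e1, e2]
      have hstepz : (S 1 m k : ℤ) = (S 1 (m-k) k : ℤ) + (p (m-k) : ℤ) := by exact_mod_cast hstep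
      rw [hstepz, hIH, add_comm]
      congr 1
      rw [show (m:ℤ) - ((1:ℕ):ℤ) * (k:ℤ) = ((m - k : ℕ):ℤ) by
        push_cast [Nat.cast_sub hkm]; ring, pz_natCast]
    · rw [S_eq_zero_of_lt (by omega)]
      rw [Finset.sum_eq_zero]
      · simp
      · intro t ht
        rw [Finset.mem_Icc] at ht
        apply pz_neg
        have : (1:ℤ) ≤ t := by exact_mod_cast ht.1
        have hk' : (m:ℤ) < k := by exact_mod_cast (by omega : m < k)
        nlinarith
lemma moebius_sum_dA (N : ℕ) :
    ∑ x ∈ N.divisorsAntidiagonal, (ArithmeticFunction.moebius x.1 : ℤ)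
      = if N = 1 then 1 else 0 := by
  have h := congrArg (fun f => f N) ArithmeticFunction.moebius_mul_coe_zeta
  simp only [ArithmeticFunction.mul_apply, ArithmeticFunction.one_apply] at h
  rw [← h]
  refine Finset.sum_congr rfl fun x hx => ?_
  have := Nat.snd_mem_divisors_of_mem_antidiagonal hx
  simp [ArithmeticFunction.zeta_apply, (Nat.pos_of_mem_divisors this).ne']

lemma base_case (n : ℕ) :
    ∑ k ∈ Finset.Icc 1 (n + 1), (S 1 (n + 1) k : ℤ) * ArithmeticFunction.moebius k
      = pz n := by
  classical
  set F : ℕ × ℕ → ℤ :=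
    fun x => (ArithmeticFunction.moebius x.1 : ℤ) * pz (((n:ℤ) + 1) - (x.2 : ℤ) * (x.1 : ℤ))
    with hF
  have step1 : ∑ k ∈ Finset.Icc 1 (n + 1), (S 1 (n + 1) k : ℤ) * ArithmeticFunction.moebius k
      = ∑ x ∈ (Finset.Icc 1 (n+1)) ×ˢ (Finset.Icc 1 (n+1)), F x := by
    rw [Finset.sum_product]
    refine Finset.sum_congr rfl fun k hk => ?_
    rw [S_one_formula k (Finset.mem_Icc.1 hk).1 (n+1), Finset.sum_mul]
    refine Finset.sum_congr rfl fun t _ => ?_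
    rw [hF]
    push_cast
    ring
  set B : Finset (ℕ × ℕ) := (Finset.Icc 1 (n+1)).biUnion (fun N => N.divisorsAntidiagonal)
    with hB
  have hBsub : B ⊆ (Finset.Icc 1 (n+1)) ×ˢ (Finset.Icc 1 (n+1)) := by
    intro x hx
    rw [hB, Finset.mem_biUnion] at hx
    obtain ⟨N, hN, hxN⟩ := hx
    rw [Finset.mem_Icc] at hN
    rw [Nat.mem_divisorsAntidiagonal] at hxN
    rw [Finset.mem_product, Finset.mem_Icc, Finset.mem_Icc]
    have h1 : x.1 ∣ N := ⟨x.2, hxN.1.symm⟩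
    have h2 : x.2 ∣ N := ⟨x.1, by rw [← hxN.1]; ring⟩
    have hN0 : 0 < N := by omega
    have := Nat.le_of_dvd hN0 h1
    have := Nat.le_of_dvd hN0 h2
    have hx1 : 0 < x.1 := Nat.pos_of_dvd_of_pos h1 hN0
    have hx2 : 0 < x.2 := Nat.pos_of_dvd_of_pos h2 hN0
    omega
  have step2 : ∑ x ∈ (Finset.Icc 1 (n+1)) ×ˢ (Finset.Icc 1 (n+1)), F x = ∑ x ∈ B, F x := by
    symm
    apply Finset.sum_subset hBsub
    intro x hx hx'
    rw [Finset.mem_product, Finset.mem_Icc, Finset.mem_Icc] at hx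
    have hgt : n + 1 < x.1 * x.2 := by
      by_contra h
      apply hx'
      rw [hB, Finset.mem_biUnion]
      refine ⟨x.1 * x.2, ?_, ?_⟩
      · rw [Finset.mem_Icc]
        constructor
        · exact Nat.one_le_iff_ne_zero.2 (Nat.mul_ne_zero (by omega) (by omega))
        · omega
      · rw [Nat.mem_divisorsAntidiagonal]
        exact ⟨rfl, Nat.mul_ne_zero (by omega) (by omega)⟩
    rw [hF]
    have : pz (((n:ℤ) + 1) - (x.2 : ℤ) * (x.1 : ℤ)) = 0 := by
      apply pz_neg
      have : ((n:ℤ) + 1) < (x.1 : ℤ) * (x.2 : ℤ) := by exact_mod_cast hgt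
      nlinarith
    simp only [this, mul_zero]
  have hdisj : ∀ N1 ∈ (Finset.Icc 1 (n+1) : Finset ℕ), ∀ N2 ∈ (Finset.Icc 1 (n+1) : Finset ℕ),
      N1 ≠ N2 → Disjoint (N1.divisorsAntidiagonal) (N2.divisorsAntidiagonal) := by
    intro N1 _ N2 _ hne
    rw [Finset.disjoint_left]
    intro x hx1 hx2
    rw [Nat.mem_divisorsAntidiagonal] at hx1 hx2
    exact hne (hx1.1.symm.trans hx2.1)
  have step3 : ∑ x ∈ B, F x
      = ∑ N ∈ Finset.Icc 1 (n+1), ∑ x ∈ N.divisorsAntidiagonal, F x := by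
    rw [hB, Finset.sum_biUnion]
    intro N1 h1 N2 h2 hne
    exact hdisj N1 h1 N2 h2 hne
  have step4 : ∀ N ∈ Finset.Icc 1 (n+1),
      ∑ x ∈ N.divisorsAntidiagonal, F x
        = (if N = 1 then 1 else 0) * pz (((n:ℤ) + 1) - (N : ℤ)) := by
    intro N hN
    rw [← moebius_sum_dA, Finset.sum_mul]
    refine Finset.sum_congr rfl fun x hx => ?_
    rw [Nat.mem_divisorsAntidiagonal] at hx
    rw [hF]
    congr 2
    rw [← hx.1]
    push_cast
    ring
  rw [step1, step2, step3, Finset.sum_congr rfl step4]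
  rw [Finset.sum_eq_single_of_mem 1 (by rw [Finset.mem_Icc]; omega)]
  · rw [if_pos rfl, one_mul]
    congr 1
    push_cast
    ring
  · intro N _ hne
    rw [if_neg hne, zero_mul]
lemma p_zero : p 0 = 1 := by rw [p]; exact Fintype.card_unique

theorem main_aux : ∀ r : ℕ, 1 ≤ r → ∀ n : ℕ,
    ∑ k ∈ Finset.Icc r (n + r), (S r (n + r) k : ℤ) * ArithmeticFunction.moebius k
      = ∑ j ∈ Finset.range (n + 1), a r j * pz ((n : ℤ) - (j : ℤ)) := by
  intro r
  induction r with
  | zero => omega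
  | succ r ih =>
    intro hr n
    rcases Nat.eq_or_lt_of_le hr with h1 | h1
    · -- base case : r + 1 = 1
      have hr0 : r = 0 := by omega
      subst hr0
      simp only [Nat.zero_add]
      rw [base_case n]
      symm
      rw [Finset.sum_eq_single_of_mem 0 (by simp)]
      · show a 1 0 * pz ((n:ℤ) - ((0:ℕ):ℤ)) = pz n
        norm_num
        rw [show a 1 0 = 1 from rfl, one_mul]
      · intro j _ hj
        rw [show a 1 j = 0 from by simp [a, hj], zero_mul]
    · -- inductive step
      have hr' : 1 ≤ r := by omega
      rw [show n + (r + 1) = (n + 1) + r from by omega]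
      have hA := ih hr' (n + 1)
      have ar0 : a r 0 = ArithmeticFunction.moebius r := by
        have h0 := ih hr' 0
        simp only [Nat.zero_add] at h0
        rw [Finset.Icc_self, Finset.sum_singleton, Finset.range_one,
          Finset.sum_singleton, S_self r hr'] at h0
        norm_num at h0
        rw [show ((0:ℤ)) = ((0:ℕ):ℤ) from rfl, pz_natCast, p_zero] at h0
        rw [Nat.cast_one, mul_one] at h0
        omega
      have hLHS1 : ∑ k ∈ Finset.Icc (r+1) ((n+1)+r),
            (S (r+1) ((n+1)+r) k : ℤ) * ArithmeticFunction.moebius k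
          = (∑ k ∈ Finset.Icc (r+1) ((n+1)+r),
              (S r ((n+1)+r) k : ℤ) * ArithmeticFunction.moebius k)
            - ∑ k ∈ Finset.Icc (r+1) ((n+1)+r),
                (S r (n+1) k : ℤ) * ArithmeticFunction.moebius k := by
        rw [← Finset.sum_sub_distrib]
        refine Finset.sum_congr rfl fun k hk => ?_
        rw [Finset.mem_Icc] at hk
        have h2 := L1 r ((n+1)+r) k hr' (by omega)
        rw [if_neg (by omega : ¬ k = r), show (n+1)+r - r = n+1 from by omega] at h2
        have h3 : (S (r+1) ((n+1)+r) k : ℤ) = (S r ((n+1)+r) k : ℤ) - (S r (n+1) k : ℤ) := by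
          omega
        rw [h3, sub_mul]
      have hIccA : Finset.Icc r ((n+1)+r) = insert r (Finset.Icc (r+1) ((n+1)+r)) := by
        ext x; simp only [Finset.mem_Icc, Finset.mem_insert]; omega
      have hApart : ∑ k ∈ Finset.Icc (r+1) ((n+1)+r),
            (S r ((n+1)+r) k : ℤ) * ArithmeticFunction.moebius k
          = (∑ j ∈ Finset.range (n+1+1), a r j * pz (((n+1:ℕ) : ℤ) - (j : ℤ)))
            - (S r ((n+1)+r) r : ℤ) * ArithmeticFunction.moebius r := by
        rw [← hA, hIccA, Finset.sum_insert (by simp [Finset.mem_Icc])]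
        ring
      have htel : (S r ((n+1)+r) r : ℤ) = (S r (n+1) r : ℤ) + (T r (n+1) : ℤ) := by
        have h4 := S_self_step r ((n+1)+r) hr' (by omega)
        rw [show (n+1)+r - r = n+1 from by omega] at h4
        omega
      have hBshrink : ∑ k ∈ Finset.Icc (r+1) ((n+1)+r),
            (S r (n+1) k : ℤ) * ArithmeticFunction.moebius k
          = ∑ k ∈ Finset.Icc (r+1) (n+1),
              (S r (n+1) k : ℤ) * ArithmeticFunction.moebius k := by
        symm
        apply Finset.sum_subset
        · intro x hx
          simp only [Finset.mem_Icc] at *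
          omega
        · intro x hx hx'
          simp only [Finset.mem_Icc] at hx hx'
          rw [S_eq_zero_of_lt (by omega), Nat.cast_zero, zero_mul]
      have hRHS1 : ∑ j ∈ Finset.range (n+1), a (r+1) j * pz ((n:ℤ) - (j:ℤ))
          = (∑ j ∈ Finset.range (n+1), a r (j+1) * pz ((n:ℤ) - (j:ℤ)))
            - ArithmeticFunction.moebius r
                * (∑ j ∈ Finset.range (n+1), b r (j+1) * pz ((n:ℤ) - (j:ℤ)))
            - ∑ j ∈ Finset.range (n+1),
                (if r ≤ j+1 then a r (j+1-r) else 0) * pz ((n:ℤ) - (j:ℤ)) := by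
        rw [Finset.mul_sum, ← Finset.sum_sub_distrib, ← Finset.sum_sub_distrib]
        refine Finset.sum_congr rfl fun j _ => ?_
        rw [a_succ r j hr']
        ring
      have hE1 : ∑ j ∈ Finset.range (n+1+1), a r j * pz (((n+1:ℕ) : ℤ) - (j : ℤ))
          = (∑ j ∈ Finset.range (n+1), a r (j+1) * pz ((n:ℤ) - (j:ℤ)))
            + a r 0 * pz (((n+1:ℕ):ℤ)) := by
        rw [Finset.sum_range_succ']
        congr 1
        · refine Finset.sum_congr rfl fun j _ => ?_
          rw [show ((n+1:ℕ):ℤ) - ((j+1:ℕ):ℤ) = (n:ℤ) - (j:ℤ) from by push_cast; ring]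
      have hE2 : (T r (n+1) : ℤ)
          = (∑ j ∈ Finset.range (n+1), b r (j+1) * pz ((n:ℤ) - (j:ℤ)))
            + pz (((n+1:ℕ):ℤ)) := by
        rw [T_eq_sum_b r hr' (n+1), Finset.sum_range_succ']
        congr 1
        · refine Finset.sum_congr rfl fun j _ => ?_
          rw [show ((n+1:ℕ):ℤ) - ((j+1:ℕ):ℤ) = (n:ℤ) - (j:ℤ) from by push_cast; ring]
        · rw [b_zero r hr', one_mul,
            show ((n+1:ℕ):ℤ) - ((0:ℕ):ℤ) = ((n+1:ℕ):ℤ) from by push_cast; ring]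
      have hE2' : (∑ j ∈ Finset.range (n+1), b r (j+1) * pz ((n:ℤ) - (j:ℤ)))
          = (T r (n+1) : ℤ) - pz (((n+1:ℕ):ℤ)) := by
        rw [hE2]; ring
      have hE3a : ∑ j ∈ Finset.range (n+1+1),
            (if r ≤ j then a r (j-r) * pz (((n+1:ℕ):ℤ) - (j:ℤ)) else 0)
          = ∑ j ∈ Finset.range (n+1),
              (if r ≤ j+1 then a r (j+1-r) else 0) * pz ((n:ℤ) - (j:ℤ)) := by
        rw [Finset.sum_range_succ']
        rw [if_neg (by omega : ¬ r ≤ 0), add_zero]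
        refine Finset.sum_congr rfl fun j _ => ?_
        rw [ite_mul, zero_mul]
        by_cases hj : r ≤ j + 1
        · rw [if_pos hj, if_pos hj,
            show ((n+1:ℕ):ℤ) - ((j+1:ℕ):ℤ) = (n:ℤ) - (j:ℤ) from by push_cast; ring]
        · rw [if_neg hj, if_neg hj]
      rw [hLHS1, hApart, hBshrink, htel, hE1, ar0, hRHS1, hE2', ← hE3a]
      by_cases hc : r ≤ n + 1
      · have hE3b : ∑ j ∈ Finset.range (n+1+1),
              (if r ≤ j then a r (j-r) * pz (((n+1:ℕ):ℤ) - (j:ℤ)) else 0)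
            = ∑ j ∈ Finset.range ((n+1-r)+1), a r j * pz (((n+1-r:ℕ):ℤ) - (j:ℤ)) := by
          apply sum_shift (n+1) r hr' hc
          intro j hj1 hj2
          rw [show ((n+1:ℕ):ℤ) - (j:ℤ) = ((n+1-r:ℕ):ℤ) - ((j-r:ℕ):ℤ) from by omega]
        have hB2 := ih hr' (n+1-r)
        rw [show (n+1-r)+r = n+1 from by omega] at hB2
        have hIccB : Finset.Icc r (n+1) = insert r (Finset.Icc (r+1) (n+1)) := by
          ext x; simp only [Finset.mem_Icc, Finset.mem_insert]; omega
        have hBpart : ∑ k ∈ Finset.Icc (r+1) (n+1),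
              (S r (n+1) k : ℤ) * ArithmeticFunction.moebius k
            = (∑ j ∈ Finset.range ((n+1-r)+1), a r j * pz (((n+1-r:ℕ):ℤ) - (j:ℤ)))
              - (S r (n+1) r : ℤ) * ArithmeticFunction.moebius r := by
          rw [← hB2, hIccB, Finset.sum_insert (by simp [Finset.mem_Icc])]
          ring
        rw [hBpart, hE3b]
        ring
      · have hB0 : Finset.Icc (r+1) (n+1) = ∅ := by
          apply Finset.Icc_eq_empty
          omega
        have hS0 : S r (n+1) r = 0 := S_eq_zero_of_lt (by omega)
        have hE30 : ∑ j ∈ Finset.range (n+1+1),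
              (if r ≤ j then a r (j-r) * pz (((n+1:ℕ):ℤ) - (j:ℤ)) else 0) = 0 := by
          apply Finset.sum_eq_zero
          intro j hj
          rw [Finset.mem_range] at hj
          rw [if_neg (by omega)]
        rw [hB0, Finset.sum_empty, hS0, hE30, Nat.cast_zero]
        ring

theorem sum_S_moebius_eq_sum_a_mul_p (n r : ℕ) (hr : 1 ≤ r) :
    ∑ k ∈ Finset.Icc r (n + r),
        (S r (n + r) k : ℤ) * ArithmeticFunction.moebius k =
      ∑ j ∈ Finset.range (n + 1), a r j * pz ((n : ℤ) - (j : ℤ)) :=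
  main_aux r hr n
end

section
/- For every integer n ≥ 6, the number of partitions of n with no parts equal to 1, at most one part equal to 2, and whose largest part occurs more than once equals ∇²[p](n) - ∇²[p](n-4) = (p(n) - 2p(n-1) + p(n-2)) - (p(n-4) - 2p(n-5) + p(n-6)). -/
open Finset

lemma msup_mem (s : Multiset ℕ) (h : s ≠ 0) : s.sup ∈ s := by
  induction s using Multiset.induction with
  | empty => simp at h
  | cons a t ih =>
    rw [Multiset.sup_cons]
    rcases eq_or_ne t 0 with rfl | ht
    · simp
    · rcases le_total a t.sup with h1 | h1
      · rw [sup_eq_right.mpr h1]; exact Multiset.mem_cons_of_mem (ih ht)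
      · rw [sup_eq_left.mpr h1]; exact Multiset.mem_cons_self a t

lemma card_split {α : Type*} [Fintype α] (q : α → Prop) :
    Nat.card {x // q x} + Nat.card {x // ¬ q x} = Nat.card α := by
  classical
  simp only [Nat.card_eq_fintype_card, Fintype.card_subtype]
  rw [Finset.card_filter_add_card_filter_not, Finset.card_univ]

lemma card_split' {α : Type*} [Fintype α] (pp q : α → Prop) :
    Nat.card {x // pp x ∧ q x} + Nat.card {x // pp x ∧ ¬ q x} = Nat.card {x // pp x} := by
  classical
  have := card_split (α := {x // pp x}) (fun y => q y.val)
  rwa [Nat.card_congr (Equiv.subtypeSubtypeEquivSubtypeInter pp q),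
    Nat.card_congr (Equiv.subtypeSubtypeEquivSubtypeInter pp (fun x => ¬ q x))] at this


noncomputable def N (k : ℕ) : ℕ := Nat.card {P : Nat.Partition k // 1 ∉ P.parts}

def delOne (m : ℕ) (P : {P : Nat.Partition (m+1) // 1 ∈ P.parts}) : Nat.Partition m where
  parts := P.val.parts.erase 1
  parts_pos := fun hi => P.val.parts_pos (Multiset.mem_of_mem_erase hi)
  parts_sum := by
    have h1 : (1 : ℕ) ∈ P.val.parts := P.property
    have h2 := P.val.parts_sum
    have h3 := congrArg Multiset.sum (Multiset.cons_erase h1)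
    simp only [Multiset.sum_cons] at h3
    omega

lemma delOne_bij (m : ℕ) : Function.Bijective (delOne m) := by
  constructor
  · rintro ⟨P, hP⟩ ⟨Q, hQ⟩ h
    have h' : P.parts.erase 1 = Q.parts.erase 1 := congrArg Nat.Partition.parts h
    apply Subtype.ext; ext1
    rw [← Multiset.cons_erase hP, ← Multiset.cons_erase hQ, h']
  · rintro Q
    refine ⟨⟨⟨1 ::ₘ Q.parts, ?_, ?_⟩, Multiset.mem_cons_self 1 _⟩, ?_⟩
    · intro i hi
      rcases Multiset.mem_cons.mp hi with rfl | hi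
      · norm_num
      · exact Q.parts_pos hi
    · simp [Q.parts_sum, add_comm]
    · ext1
      simp [delOne]

lemma p_succ (m : ℕ) : Nat.card (Nat.Partition (m+1)) = Nat.card (Nat.Partition m) + N (m+1) := by
  have h := card_split (α := Nat.Partition (m+1)) (fun P => 1 ∈ P.parts)
  have h2 := Nat.card_eq_of_bijective _ (delOne_bij m)
  unfold N
  omega

def UMax3 {k : ℕ} (P : Nat.Partition k) : Prop :=
  ∃ m ∈ P.parts, (∀ i ∈ P.parts, i ≤ m) ∧ P.parts.count m = 1 ∧ 3 ≤ m

def MaxRep {k : ℕ} (P : Nat.Partition k) : Prop :=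
  ∃ m ∈ P.parts, (∀ i ∈ P.parts, i ≤ m) ∧ 2 ≤ P.parts.count m

lemma parts_ne {k : ℕ} (hk : 1 ≤ k) (Q : Nat.Partition k) : Q.parts ≠ 0 := by
  intro h
  have := Q.parts_sum
  rw [h] at this
  simp at this
  omega

lemma sup_mem_parts {k : ℕ} (hk : 1 ≤ k) (Q : Nat.Partition k) : Q.parts.sup ∈ Q.parts :=
  msup_mem _ (parts_ne hk Q)

lemma sup_ge_two {k : ℕ} (hk : 1 ≤ k) (Q : Nat.Partition k) (hQ : 1 ∉ Q.parts) :
    2 ≤ Q.parts.sup := by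
  have hm := sup_mem_parts hk Q
  have h1 := Q.parts_pos hm
  have h2 : Q.parts.sup ≠ 1 := fun h => hQ (h ▸ hm)
  omega

def addMax (m : ℕ) (hm : 1 ≤ m) (Q : {Q : Nat.Partition m // 1 ∉ Q.parts}) :
    {P : Nat.Partition (m+1) // 1 ∉ P.parts ∧ UMax3 P} :=
  ⟨⟨(Q.val.parts.sup + 1) ::ₘ Q.val.parts.erase Q.val.parts.sup, by
      intro i hi
      rcases Multiset.mem_cons.mp hi with rfl | hi
      · omega
      · exact Q.val.parts_pos (Multiset.mem_of_mem_erase hi), by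
      have hmem := sup_mem_parts hm Q.val
      have h3 := congrArg Multiset.sum (Multiset.cons_erase hmem)
      simp only [Multiset.sum_cons] at h3
      have h4 := Q.val.parts_sum
      simp only [Multiset.sum_cons]
      omega⟩, by
    have hmem := sup_mem_parts hm Q.val
    have h2 := sup_ge_two hm Q.val Q.property
    constructor
    · intro h
      rcases Multiset.mem_cons.mp h with h | h
      · omega
      · exact Q.property (Multiset.mem_of_mem_erase h)
    · refine ⟨Q.val.parts.sup + 1, Multiset.mem_cons_self _ _, ?_, ?_, by omega⟩
      · intro i hi
        rcases Multiset.mem_cons.mp hi with rfl | hi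
        · omega
        · exact le_trans (Multiset.le_sup (Multiset.mem_of_mem_erase hi)) (by omega)
      · rw [Multiset.count_cons_self]
        have : Q.val.parts.sup + 1 ∉ Q.val.parts.erase Q.val.parts.sup := by
          intro h
          have := Multiset.le_sup (Multiset.mem_of_mem_erase h)
          omega
        rw [Multiset.count_eq_zero.mpr this]⟩

lemma sup_cons_erase_sup {k : ℕ} (hk : 1 ≤ k) (Q : Nat.Partition k) :
    ((Q.parts.sup + 1) ::ₘ Q.parts.erase Q.parts.sup).sup = Q.parts.sup + 1 := by
  rw [Multiset.sup_cons]
  have : (Q.parts.erase Q.parts.sup).sup ≤ Q.parts.sup := by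
    rw [Multiset.sup_le]
    intro b hb
    exact Multiset.le_sup (Multiset.mem_of_mem_erase hb)
  exact sup_eq_left.mpr (le_trans this (by omega))

lemma addMax_bij (m : ℕ) (hm : 1 ≤ m) : Function.Bijective (addMax m hm) := by
  constructor
  · rintro ⟨Q, hQ⟩ ⟨Q', hQ'⟩ h
    have h' : (Q.parts.sup + 1) ::ₘ Q.parts.erase Q.parts.sup
        = (Q'.parts.sup + 1) ::ₘ Q'.parts.erase Q'.parts.sup := by
      exact congrArg (fun x => x.val.parts) h
    have hsup : Q.parts.sup = Q'.parts.sup := by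
      have := congrArg Multiset.sup h'
      rw [sup_cons_erase_sup hm Q, sup_cons_erase_sup hm Q'] at this
      omega
    rw [hsup] at h'
    rw [Multiset.cons_inj_right] at h'
    apply Subtype.ext; ext1
    rw [← Multiset.cons_erase (sup_mem_parts hm Q), ← Multiset.cons_erase (sup_mem_parts hm Q'),
      hsup, h']
  · rintro ⟨P, hP1, w, hw, hwmax, hwc, hw3⟩
    have hwe : w ∉ P.parts.erase w := by
      rw [← Multiset.count_eq_zero, Multiset.count_erase_self, hwc]
    have hsum : w + (P.parts.erase w).sum = m + 1 := by
      have := congrArg Multiset.sum (Multiset.cons_erase hw)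
      simp only [Multiset.sum_cons] at this
      rw [this]; exact P.parts_sum
    refine ⟨⟨⟨(w - 1) ::ₘ P.parts.erase w, ?_, ?_⟩, ?_⟩, ?_⟩
    · intro i hi
      rcases Multiset.mem_cons.mp hi with rfl | hi
      · omega
      · exact P.parts_pos (Multiset.mem_of_mem_erase hi)
    · simp only [Multiset.sum_cons]; omega
    · intro h
      rcases Multiset.mem_cons.mp h with h | h
      · omega
      · exact hP1 (Multiset.mem_of_mem_erase h)
    · have hsup : ((w - 1) ::ₘ P.parts.erase w).sup = w - 1 := by
        rw [Multiset.sup_cons]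
        apply sup_eq_left.mpr
        rw [Multiset.sup_le]
        intro b hb
        have h1 := hwmax b (Multiset.mem_of_mem_erase hb)
        have h2 : b ≠ w := fun h => hwe (h ▸ hb)
        omega
      apply Subtype.ext; ext1
      show (((w - 1) ::ₘ P.parts.erase w).sup + 1)
          ::ₘ ((w - 1) ::ₘ P.parts.erase w).erase (((w - 1) ::ₘ P.parts.erase w).sup) = P.parts
      rw [hsup, Multiset.erase_cons_head]
      have : w - 1 + 1 = w := by omega
      rw [this, Multiset.cons_erase hw]

def addTwos (m : ℕ) (hm : 1 ≤ m) (Q : {Q : Nat.Partition m // 1 ∉ Q.parts ∧ ¬ UMax3 Q}) :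
    {P : Nat.Partition (m+4) // 1 ∉ P.parts ∧ 2 ≤ P.parts.count 2 ∧ MaxRep P} :=
  ⟨⟨2 ::ₘ 2 ::ₘ Q.val.parts, by
      intro i hi
      rcases Multiset.mem_cons.mp hi with rfl | hi
      · omega
      rcases Multiset.mem_cons.mp hi with rfl | hi
      · omega
      · exact Q.val.parts_pos hi, by
      simp only [Multiset.sum_cons, Q.val.parts_sum]
      omega⟩, by
    obtain ⟨hQ1, hQU⟩ := Q.property
    have hmem := sup_mem_parts hm Q.val
    have h2 := sup_ge_two hm Q.val hQ1
    refine ⟨?_, ?_, ?_⟩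
    · intro h
      rcases Multiset.mem_cons.mp h with h | h
      · omega
      rcases Multiset.mem_cons.mp h with h | h
      · omega
      · exact hQ1 h
    · rw [Multiset.count_cons_self, Multiset.count_cons_self]
      omega
    · rcases eq_or_lt_of_le h2 with h3 | h3
      · -- sup = 2
        refine ⟨2, Multiset.mem_cons_self _ _, ?_, ?_⟩
        · intro i hi
          rcases Multiset.mem_cons.mp hi with rfl | hi
          · omega
          rcases Multiset.mem_cons.mp hi with rfl | hi
          · omega
          · have := Multiset.le_sup hi
            omega
        · rw [Multiset.count_cons_self, Multiset.count_cons_self]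
          omega
      · -- sup ≥ 3
        have hc : Q.val.parts.count Q.val.parts.sup ≠ 1 := by
          intro hc1
          exact hQU ⟨Q.val.parts.sup, hmem, fun i hi => Multiset.le_sup hi, hc1, by omega⟩
        have hc0 : 1 ≤ Q.val.parts.count Q.val.parts.sup := Multiset.one_le_count_iff_mem.mpr hmem
        refine ⟨Q.val.parts.sup, Multiset.mem_cons_of_mem (Multiset.mem_cons_of_mem hmem),
          ?_, ?_⟩
        · intro i hi
          rcases Multiset.mem_cons.mp hi with rfl | hi
          · omega
          rcases Multiset.mem_cons.mp hi with rfl | hi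
          · omega
          · exact Multiset.le_sup hi
        · rw [Multiset.count_cons_of_ne (by omega), Multiset.count_cons_of_ne (by omega)]
          omega⟩

lemma addTwos_bij (m : ℕ) (hm : 1 ≤ m) : Function.Bijective (addTwos m hm) := by
  constructor
  · rintro ⟨Q, hQ⟩ ⟨Q', hQ'⟩ h
    have h' : (2 : ℕ) ::ₘ 2 ::ₘ Q.parts = 2 ::ₘ 2 ::ₘ Q'.parts :=
      congrArg (fun x => x.val.parts) h
    rw [Multiset.cons_inj_right, Multiset.cons_inj_right] at h'
    apply Subtype.ext; ext1; exact h'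
  · rintro ⟨P, hP1, hc2, w, hw, hwmax, hwc⟩
    have h2 : (2 : ℕ) ∈ P.parts := Multiset.count_pos.mp (by omega)
    have h2' : (2 : ℕ) ∈ P.parts.erase 2 := by
      rw [← Multiset.count_pos, Multiset.count_erase_self]
      omega
    have hrec : (2 : ℕ) ::ₘ 2 ::ₘ (P.parts.erase 2).erase 2 = P.parts := by
      rw [Multiset.cons_erase h2', Multiset.cons_erase h2]
    have hsum : ((P.parts.erase 2).erase 2).sum + 4 = m + 4 := by
      have := congrArg Multiset.sum hrec
      simp only [Multiset.sum_cons] at this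
      rw [P.parts_sum] at this
      omega
    refine ⟨⟨⟨(P.parts.erase 2).erase 2, ?_, by omega⟩, ?_, ?_⟩, ?_⟩
    · intro i hi
      exact P.parts_pos (Multiset.mem_of_mem_erase (Multiset.mem_of_mem_erase hi))
    · intro h
      exact hP1 (Multiset.mem_of_mem_erase (Multiset.mem_of_mem_erase h))
    · rintro ⟨w', hw', hmax', hc1', h3'⟩
      have hw'P : w' ∈ P.parts := Multiset.mem_of_mem_erase (Multiset.mem_of_mem_erase hw')
      have hw'w : w' ≤ w := hwmax w' hw'P
      have hwne2 : w ≠ 2 := by omega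
      have hcw : ((P.parts.erase 2).erase 2).count w = P.parts.count w := by
        rw [Multiset.count_erase_of_ne hwne2, Multiset.count_erase_of_ne hwne2]
      have hwQ : w ∈ (P.parts.erase 2).erase 2 := Multiset.count_pos.mp (by omega)
      have hww' : w ≤ w' := hmax' w hwQ
      have : w = w' := le_antisymm hww' hw'w
      rw [← this, hcw] at hc1'
      omega
    · apply Subtype.ext; ext1
      exact hrec

noncomputable def A'' (k : ℕ) : ℕ := Nat.card {P : Nat.Partition k // 1 ∉ P.parts ∧ ¬ UMax3 P}

lemma N_succ (m : ℕ) (hm : 1 ≤ m) : N (m+1) = A'' (m+1) + N m := by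
  have h := card_split' (α := Nat.Partition (m+1)) (fun P => 1 ∉ P.parts) (fun P => UMax3 P)
  have h2 := Nat.card_eq_of_bijective _ (addMax_bij m hm)
  unfold N A'' at *
  omega

lemma bad_eq (m : ℕ) (hm : 1 ≤ m) :
    Nat.card {P : Nat.Partition (m+4) // 1 ∉ P.parts ∧ 2 ≤ P.parts.count 2 ∧ MaxRep P}
      = A'' m := by
  have h2 := Nat.card_eq_of_bijective _ (addTwos_bij m hm)
  unfold A''
  omega

lemma maxRep_iff {k : ℕ} (hk : 3 ≤ k) (P : Nat.Partition k) (h1 : 1 ∉ P.parts) :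
    MaxRep P ↔ ¬ UMax3 P := by
  constructor
  · rintro ⟨w, hw, hmax, hc⟩ ⟨w', hw', hmax', hc1, h3⟩
    have : w = w' := le_antisymm (hmax' w hw) (hmax w' hw')
    rw [this] at hc
    omega
  · intro hU
    have hk1 : 1 ≤ k := by omega
    have hmem := sup_mem_parts hk1 P
    have h2 := sup_ge_two hk1 P h1
    by_cases hc : 2 ≤ P.parts.count P.parts.sup
    · exact ⟨P.parts.sup, hmem, fun i hi => Multiset.le_sup hi, hc⟩
    · exfalso
      have hc1 : P.parts.count P.parts.sup = 1 := by
        have := Multiset.one_le_count_iff_mem.mpr hmem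
        omega
      have h3 : ¬ (3 ≤ P.parts.sup) := fun h3 =>
        hU ⟨P.parts.sup, hmem, fun i hi => Multiset.le_sup hi, hc1, h3⟩
      have hs2 : P.parts.sup = 2 := by omega
      have hall : ∀ b ∈ P.parts, b = 2 := by
        intro b hb
        have := Multiset.le_sup hb
        have := P.parts_pos hb
        have : b ≠ 1 := fun h => h1 (h ▸ hb)
        omega
      have hrep : P.parts = Multiset.replicate (Multiset.card P.parts) 2 :=
        Multiset.eq_replicate_card.mpr hall
      have hcount := congrArg (Multiset.count 2) hrep
      rw [Multiset.count_replicate] at hcount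
      simp at hcount
      rw [hs2] at hc1
      have hsum := P.parts_sum
      rw [hrep, Multiset.sum_replicate] at hsum
      simp only [smul_eq_mul] at hsum
      omega

theorem card_no_ones_at_most_one_two_max_repeated (n : ℕ) (hn : 6 ≤ n) :
    (Nat.card {P : Nat.Partition n //
        1 ∉ P.parts ∧ P.parts.count 2 ≤ 1 ∧
        ∃ m ∈ P.parts, (∀ i ∈ P.parts, i ≤ m) ∧ 2 ≤ P.parts.count m} : ℤ) =
      ((p n : ℤ) - 2 * (p (n - 1) : ℤ) + (p (n - 2) : ℤ)) -
        ((p (n - 4) : ℤ) - 2 * (p (n - 5) : ℤ) + (p (n - 6) : ℤ)) := by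
  obtain ⟨m, rfl⟩ : ∃ m, n = m + 6 := ⟨n - 6, by omega⟩
  have e1 : m + 6 - 1 = m + 5 := by omega
  have e2 : m + 6 - 2 = m + 4 := by omega
  have e3 : m + 6 - 4 = m + 2 := by omega
  have e4 : m + 6 - 5 = m + 1 := by omega
  have e5 : m + 6 - 6 = m := by omega
  rw [e1, e2, e3, e4, e5]
  have hsplit := card_split' (α := Nat.Partition (m+6))
    (fun P => 1 ∉ P.parts ∧ MaxRep P) (fun P => P.parts.count 2 ≤ 1)
  have eL : Nat.card {P : Nat.Partition (m+6) //
        (1 ∉ P.parts ∧ MaxRep P) ∧ P.parts.count 2 ≤ 1}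
      = Nat.card {P : Nat.Partition (m+6) //
        1 ∉ P.parts ∧ P.parts.count 2 ≤ 1 ∧ MaxRep P} :=
    Nat.card_congr (Equiv.subtypeEquivRight fun P => by tauto)
  have eB : Nat.card {P : Nat.Partition (m+6) //
        (1 ∉ P.parts ∧ MaxRep P) ∧ ¬ P.parts.count 2 ≤ 1}
      = Nat.card {P : Nat.Partition (m+6) //
        1 ∉ P.parts ∧ 2 ≤ P.parts.count 2 ∧ MaxRep P} :=
    Nat.card_congr (Equiv.subtypeEquivRight fun P => by
      constructor
      · rintro ⟨⟨a, b⟩, c⟩; exact ⟨a, by omega, b⟩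
      · rintro ⟨a, b, c⟩; exact ⟨⟨a, c⟩, by omega⟩)
  have eA : Nat.card {P : Nat.Partition (m+6) // 1 ∉ P.parts ∧ MaxRep P} = A'' (m+6) :=
    Nat.card_congr (Equiv.subtypeEquivRight fun P =>
      and_congr_right fun h1 => maxRep_iff (by omega) P h1)
  have eBad : Nat.card {P : Nat.Partition (m+6) //
        1 ∉ P.parts ∧ 2 ≤ P.parts.count 2 ∧ MaxRep P} = A'' (m+2) :=
    bad_eq (m+2) (by omega)
  have hNs : N (m+6) = A'' (m+6) + N (m+5) := N_succ (m+5) (by omega)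
  have hNs' : N (m+2) = A'' (m+2) + N (m+1) := N_succ (m+1) (by omega)
  have hp1 : p (m+6) = p (m+5) + N (m+6) := by
    simpa [p, Nat.card_eq_fintype_card] using p_succ (m+5)
  have hp2 : p (m+5) = p (m+4) + N (m+5) := by
    simpa [p, Nat.card_eq_fintype_card] using p_succ (m+4)
  have hp3 : p (m+2) = p (m+1) + N (m+2) := by
    simpa [p, Nat.card_eq_fintype_card] using p_succ (m+1)
  have hp4 : p (m+1) = p m + N (m+1) := by
    simpa [p, Nat.card_eq_fintype_card] using p_succ m
  show (Nat.card {P : Nat.Partition (m+6) //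
      1 ∉ P.parts ∧ P.parts.count 2 ≤ 1 ∧ MaxRep P} : ℤ) = _
  omega
end
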